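/- Let J : ℂⁿ → ℂⁿ be an ℝ-linear map with det(J_st + J) ≠ 0, where J_st denotes multiplication by i. Define Q = (J_st + J)⁻¹ ∘ (J_st − J). Then J² = −I if and only if Q ∘ J_st + J_st ∘ Q = 0, i.e. Q is complex anti-linear. -/
import Mathlib


/-- The standard complex structure on ℂⁿ viewed as ℝ-linear map: v ↦ i·v. -/
noncomputable def Jstd (n : ℕ) : (Fin n → ℂ) →ₗ[ℝ] (Fin n → ℂ) :=
  LinearMap.restrictScalars ℝ (Complex.I • (LinearMap.id : (Fin n → ℂ) →ₗ[ℂ] (Fin n → ℂ)))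

/-- If `J_st + J` is invertible and `Q = (J_st + J)⁻¹ ∘ (J_st − J)`, then `J² = −I`
iff `Q ∘ J_st + J_st ∘ Q = 0`, i.e. `Q` is complex anti-linear. -/
theorem stmt0 (n : ℕ) (J Q : (Fin n → ℂ) →ₗ[ℝ] (Fin n → ℂ))
    (hinv : Function.Bijective (Jstd n + J))
    (hQ : (Jstd n + J) ∘ₗ Q = Jstd n - J) :
    J ∘ₗ J = -LinearMap.id ↔ Q ∘ₗ Jstd n + Jstd n ∘ₗ Q = 0 := by
  set A := Jstd n with hA
  set S := A + J with hS
  -- A² = −1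
  have ha : A * A = -1 := by
    apply LinearMap.ext; intro v
    show A (A v) = -v
    funext i
    simp [hA, Jstd]
    ring_nf
    rw [Complex.I_sq]; ring
  -- A is bijective
  have hAbij : Function.Bijective A := by
    rw [Function.bijective_iff_has_inverse]
    refine ⟨-A, fun v => ?_, fun v => ?_⟩ <;>
    · have := congrArg (fun f => f v) ha
      simp only [Module.End.mul_apply, LinearMap.neg_apply, Module.End.one_apply] at this ⊢
      simp [this]
  have hq : S * Q = A - J := hQ
  -- S(1+Q) = A + A
  have h2A : S * (1 + Q) = A + A := by
    rw [mul_add, mul_one, hq, hS]; abel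
  -- 1 + Q is surjective
  have hsurj : Function.Surjective ((1 + Q) : (Fin n → ℂ) →ₗ[ℝ] (Fin n → ℂ)) := by
    intro y
    obtain ⟨w, hw⟩ := hAbij.2 (S y)
    refine ⟨(2:ℝ)⁻¹ • w, hinv.1 ?_⟩
    have := congrArg (fun f => f ((2:ℝ)⁻¹ • w)) h2A
    simp only [Module.End.mul_apply] at this
    show S ((1 + Q) ((2:ℝ)⁻¹ • w)) = S y
    rw [this]
    simp only [LinearMap.add_apply, map_smul, hw]
    rw [← two_smul ℝ, smul_smul]
    norm_num
  -- key identity 1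
  have key1 : S * (S * Q + Q * S) = -(J * J + J * J) - (1 + 1) := by
    have h1 : S * (S * Q + Q * S) = S * (S * Q) + (S * Q) * S := by noncomm_ring
    rw [h1, hq, hS]
    have expand : (A + J) * (A - J) + (A - J) * (A + J)
        = A * A + A * A - (J * J + J * J) := by
      simp only [mul_sub, sub_mul, add_mul, mul_add]; abel
    rw [expand, ha]; noncomm_ring
  -- key identity 2
  have key2 : (S * Q + Q * S) * (1 + Q) = (Q * A + A * Q) + (Q * A + A * Q) := by
    have h1 : (Q * A + A * Q) + (Q * A + A * Q) = Q * (A + A) + (A + A) * Q := by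
      noncomm_ring
    rw [h1, ← h2A]; noncomm_ring
  constructor
  · intro h
    have hJJ : J * J = -1 := h
    have h0 : S * (S * Q + Q * S) = 0 := by rw [key1, hJJ]; noncomm_ring
    have h1 : S * Q + Q * S = 0 := by
      apply LinearMap.ext; intro v
      have h2 := congrArg (fun f => f v) h0
      simp only [Module.End.mul_apply, LinearMap.zero_apply] at h2 ⊢
      exact hinv.1 (by simpa using h2)
    have h2 : (Q * A + A * Q) + (Q * A + A * Q) = 0 := by
      rw [← key2, h1, zero_mul]
    show Q * A + A * Q = 0
    apply LinearMap.ext; intro v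
    have h3 := congrArg (fun f => f v) h2
    simp only [LinearMap.add_apply, LinearMap.zero_apply] at h3 ⊢
    have h4 : (2:ℝ) • ((Q * A + A * Q) v) = 0 := by
      rw [two_smul]; simpa using h3
    simpa using (smul_eq_zero.mp h4).resolve_left (by norm_num)
  · intro h
    have h0 : Q * A + A * Q = 0 := h
    have h1 : (S * Q + Q * S) * (1 + Q) = 0 := by rw [key2, h0]; simp
    have h2 : S * Q + Q * S = 0 := by
      apply LinearMap.ext; intro v
      obtain ⟨w, hw⟩ := hsurj v
      have h3 := congrArg (fun f => f w) h1
      simp only [Module.End.mul_apply, LinearMap.zero_apply] at h3 ⊢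
      rw [hw] at h3; exact h3
    have h3 : J * J + J * J = (-1) + (-1) := by
      have h4 := key1
      rw [h2, mul_zero] at h4
      have h5 : -(J * J + J * J) = 1 + 1 := sub_eq_zero.mp h4.symm
      have h6 : J * J + J * J = -(1 + 1) := by rw [← neg_neg (J * J + J * J), h5]
      rw [h6]; abel
    show J * J = -1
    apply LinearMap.ext; intro v
    have h4 := congrArg (fun f => f v) h3
    simp only [LinearMap.add_apply, LinearMap.neg_apply, Module.End.one_apply,
      Module.End.mul_apply] at h4 ⊢
    have h5 : (2:ℝ) • (J (J v)) = (2:ℝ) • (-v) := by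
      rw [two_smul, two_smul]; simpa using h4
    exact smul_right_injective _ (by norm_num : (2:ℝ) ≠ 0) h5
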